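/- Let f : X → ℝ be Hölder continuous admitting a unique maximizing measure μ_∞, let V be a calibrated subaction for f, and set R_− = f + V − V∘σ − β(f). Let (y_n)_{n≥1} be a sequence in X satisfying σ(y_{n+1}) = y_n for all n ≥ 1 and R_−(y_n) = 0 for all n ≥ 1. Then every point p in the support of μ_∞ is an accumulation point of the sequence (y_n). -/

import Mathlib

open MeasureTheory Filter Topology Set ENNReal

noncomputable section

namespace GXY2

open scoped NNReal

/-- a fixed ultrafilter extending `atTop` on ℕ -/
def UF : Ultrafilter ℕ := Ultrafilter.of atTop

lemma UF_le : (UF : Filter ℕ) ≤ atTop := Ultrafilter.of_le _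

variable {X : Type*} [TopologicalSpace X] [CompactSpace X]

/-- Birkhoff-type average along the sequence `y 1, y 2, …`. -/
def birkAvg (y : ℕ → X) (g : X → ℝ) (n : ℕ) : ℝ :=
  (∑ k ∈ Finset.range n, g (y (k + 1))) / n

lemma abs_birkAvg_le (y : ℕ → X) (g : C(X, ℝ)) (n : ℕ) :
    |birkAvg y (⇑g) n| ≤ ‖g‖ := by
  unfold birkAvg
  rcases Nat.eq_zero_or_pos n with hn | hn
  · simp [hn, norm_nonneg]
  · rw [abs_div, abs_of_nonneg (by positivity : (0:ℝ) ≤ (n : ℝ))]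
    rw [div_le_iff₀ (by exact_mod_cast hn)]
    calc |∑ k ∈ Finset.range n, g (y (k + 1))| ≤ ∑ k ∈ Finset.range n, |g (y (k + 1))| :=
        Finset.abs_sum_le_sum_abs _ _
      _ ≤ ∑ _k ∈ Finset.range n, ‖g‖ := by
          refine Finset.sum_le_sum fun k _ => ?_
          simpa [Real.norm_eq_abs] using g.norm_coe_le_norm (y (k + 1))
      _ = n * ‖g‖ := by simp [mul_comm]
      _ = ‖g‖ * n := by ring

lemma exists_lam (y : ℕ → X) (g : C(X, ℝ)) :
    ∃ a : ℝ, Tendsto (birkAvg y (⇑g)) (UF : Filter ℕ) (𝓝 a) := by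
  have hb : ∀ n, birkAvg y (⇑g) n ∈ Set.Icc (-‖g‖) ‖g‖ := fun n =>
    abs_le.1 (abs_birkAvg_le y g n)
  obtain ⟨a, _, hle⟩ := isCompact_Icc.ultrafilter_le_nhds (UF.map (birkAvg y (⇑g)))
    (by
      rw [le_principal_iff]
      exact Filter.mem_map.2 (Filter.univ_mem' hb))
  exact ⟨a, by rwa [Ultrafilter.coe_map] at hle⟩

/-- The "limit of Birkhoff averages along the ultrafilter" functional. -/
def lam (y : ℕ → X) (g : C(X, ℝ)) : ℝ := (exists_lam y g).choose

lemma lam_spec (y : ℕ → X) (g : C(X, ℝ)) :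
    Tendsto (birkAvg y (⇑g)) (UF : Filter ℕ) (𝓝 (lam y g)) := (exists_lam y g).choose_spec

lemma lam_unique {y : ℕ → X} {g : C(X, ℝ)} {a : ℝ}
    (h : Tendsto (birkAvg y (⇑g)) (UF : Filter ℕ) (𝓝 a)) : lam y g = a :=
  tendsto_nhds_unique (lam_spec y g) h

lemma lam_add (y : ℕ → X) (g h : C(X, ℝ)) : lam y (g + h) = lam y g + lam y h := by
  refine lam_unique ?_
  have : birkAvg y (⇑(g + h)) = fun n => birkAvg y (⇑g) n + birkAvg y (⇑h) n := by
    funext n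
    unfold birkAvg
    rw [← add_div, ← Finset.sum_add_distrib]
    simp
  rw [this]
  exact (lam_spec y g).add (lam_spec y h)

lemma lam_smul (y : ℕ → X) (c : ℝ) (g : C(X, ℝ)) : lam y (c • g) = c * lam y g := by
  refine lam_unique ?_
  have : birkAvg y (⇑(c • g)) = fun n => c * birkAvg y (⇑g) n := by
    funext n
    unfold birkAvg
    simp only [ContinuousMap.coe_smul, Pi.smul_apply, smul_eq_mul]
    rw [← Finset.mul_sum, mul_div_assoc]
  rw [this]
  exact (lam_spec y g).const_mul c

lemma lam_one (y : ℕ → X) : lam y (1 : C(X, ℝ)) = 1 := by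
  refine lam_unique ?_
  have h : ∀ᶠ n in atTop, birkAvg y (⇑(1 : C(X, ℝ))) n = 1 := by
    filter_upwards [eventually_ge_atTop 1] with n hn
    unfold birkAvg
    simp only [ContinuousMap.coe_one, Pi.one_apply, Finset.sum_const, Finset.card_range,
      nsmul_eq_mul, mul_one]
    rw [div_self]
    exact_mod_cast Nat.pos_of_ne_zero (by omega) |>.ne'
  have : Tendsto (birkAvg y (⇑(1 : C(X, ℝ)))) atTop (𝓝 1) :=
    Tendsto.congr' (h.mono fun n hn => hn.symm) tendsto_const_nhds
  exact this.mono_left UF_le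

lemma lam_mono (y : ℕ → X) {g h : C(X, ℝ)} (hgh : ∀ x, g x ≤ h x) : lam y g ≤ lam y h := by
  refine le_of_tendsto_of_tendsto' (lam_spec y g) (lam_spec y h) fun n => ?_
  unfold birkAvg
  rcases Nat.eq_zero_or_pos n with hn | hn
  · simp [hn]
  · apply div_le_div_of_nonneg_right ?_ (by positivity)
    exact Finset.sum_le_sum fun k _ => hgh (y (k + 1))

lemma lam_zero (y : ℕ → X) : lam y (0 : C(X, ℝ)) = 0 := by
  refine lam_unique ?_
  have : birkAvg y (⇑(0 : C(X, ℝ))) = fun _ => (0 : ℝ) := by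
    funext n; unfold birkAvg; simp
  rw [this]
  exact tendsto_const_nhds

lemma lam_nonneg (y : ℕ → X) {g : C(X, ℝ)} (hg : ∀ x, 0 ≤ g x) : 0 ≤ lam y g := by
  have := lam_mono y (g := 0) (h := g) (by simpa using hg)
  rwa [lam_zero] at this

lemma lam_comp (y : ℕ → X) (T : C(X, X)) (hyT : ∀ n ≥ 1, T (y (n + 1)) = y n)
    (g : C(X, ℝ)) : lam y (g.comp T) = lam y g := by
  have hdiff : Tendsto (fun n => birkAvg y (⇑(g.comp T)) n - birkAvg y (⇑g) n) atTop (𝓝 0) := by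
    refine squeeze_zero_norm' ?_ (tendsto_const_div_atTop_nhds_zero_nat (2 * ‖g‖))
    filter_upwards [eventually_ge_atTop 1] with n hn
    obtain ⟨m, rfl⟩ : ∃ m, n = m + 1 := ⟨n - 1, by omega⟩
    have key : ∑ k ∈ Finset.range (m + 1), g (T (y (k + 1)))
        = (∑ k ∈ Finset.range m, g (y (k + 1))) + g (T (y 1)) := by
      rw [Finset.sum_range_succ']
      congr 1
      refine Finset.sum_congr rfl fun k _ => ?_
      rw [hyT (k + 1) (by omega)]
    have : birkAvg y (⇑(g.comp T)) (m + 1) - birkAvg y (⇑g) (m + 1)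
        = (g (T (y 1)) - g (y (m + 1))) / (m + 1) := by
      unfold birkAvg
      simp only [ContinuousMap.comp_apply]
      rw [key, Finset.sum_range_succ, div_sub_div_same]
      push_cast
      ring
    rw [this, Real.norm_eq_abs, abs_div, abs_of_nonneg (by positivity : (0:ℝ) ≤ ((m:ℝ) + 1))]
    have hb : |g (T (y 1)) - g (y (m + 1))| ≤ 2 * ‖g‖ := by
      have h1 : |g (T (y 1))| ≤ ‖g‖ := by
        simpa [Real.norm_eq_abs] using g.norm_coe_le_norm (T (y 1))
      have h2 : |g (y (m + 1))| ≤ ‖g‖ := by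
        simpa [Real.norm_eq_abs] using g.norm_coe_le_norm (y (m + 1))
      calc |g (T (y 1)) - g (y (m + 1))| ≤ |g (T (y 1))| + |g (y (m + 1))| := abs_sub _ _
        _ ≤ 2 * ‖g‖ := by linarith
    have hcast : ((m : ℝ) + 1) = ((m + 1 : ℕ) : ℝ) := by push_cast; ring
    rw [hcast]
    exact div_le_div_of_nonneg_right hb (by positivity)
  have h1 := lam_spec y (g.comp T)
  have h2 := lam_spec y g
  have h3 : Tendsto (fun n => birkAvg y (⇑(g.comp T)) n - birkAvg y (⇑g) n)
      (UF : Filter ℕ) (𝓝 (lam y (g.comp T) - lam y g)) := h1.sub h2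
  have h4 := hdiff.mono_left UF_le
  have := tendsto_nhds_unique h3 h4
  linarith

lemma lam_eventually_zero (y : ℕ → X) (g : C(X, ℝ)) (h : ∀ᶠ k in atTop, g (y k) = 0) :
    lam y g = 0 := by
  obtain ⟨N, hN⟩ := eventually_atTop.1 h
  set c : ℝ := ∑ k ∈ Finset.range N, g (y (k + 1)) with hc
  have hev : ∀ᶠ n in atTop, birkAvg y (⇑g) n = c / n := by
    filter_upwards [eventually_ge_atTop N] with n hn
    unfold birkAvg
    congr 1
    rw [hc]
    refine (Finset.sum_subset (Finset.range_subset_range.2 hn) fun k _ hk => ?_).symm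
    exact hN (k + 1) (by simp only [Finset.mem_range, not_lt] at hk; omega)
  have : Tendsto (birkAvg y (⇑g)) atTop (𝓝 0) :=
    Tendsto.congr' (hev.mono fun n hn => hn.symm) (tendsto_const_div_atTop_nhds_zero_nat c)
  exact lam_unique (this.mono_left UF_le)

end GXY2

namespace GXY2

open scoped NNReal

variable {X : Type*} [TopologicalSpace X] [CompactSpace X] [T2Space X]

/-- Test functions dominating the indicator of `K`. -/
def FF (y : ℕ → X) (K : Set X) : Set ℝ :=
  {r | ∃ g : C(X, ℝ), (∀ x, 0 ≤ g x) ∧ (∀ x ∈ K, 1 ≤ g x) ∧ r = lam y g}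

lemma FF_nonempty (y : ℕ → X) (K : Set X) : (FF y K).Nonempty :=
  ⟨lam y 1, 1, fun x => by simp, fun x _ => by simp, rfl⟩

lemma FF_bddBelow (y : ℕ → X) (K : Set X) : BddBelow (FF y K) :=
  ⟨0, fun r ⟨g, hg0, _, hr⟩ => hr ▸ lam_nonneg y hg0⟩

/-- The content value. -/
def lam0 (y : ℕ → X) (K : Set X) : ℝ := sInf (FF y K)

lemma lam0_nonneg (y : ℕ → X) (K : Set X) : 0 ≤ lam0 y K :=
  le_csInf (FF_nonempty y K) fun r ⟨g, hg0, _, hr⟩ => hr ▸ lam_nonneg y hg0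

lemma lam0_le (y : ℕ → X) {K : Set X} {g : C(X, ℝ)} (hg0 : ∀ x, 0 ≤ g x)
    (hg1 : ∀ x ∈ K, 1 ≤ g x) : lam0 y K ≤ lam y g :=
  csInf_le (FF_bddBelow y K) ⟨g, hg0, hg1, rfl⟩

lemma lam0_mono (y : ℕ → X) {K₁ K₂ : Set X} (h : K₁ ⊆ K₂) : lam0 y K₁ ≤ lam0 y K₂ :=
  csInf_le_csInf (FF_bddBelow y K₁) (FF_nonempty y K₂)
    (fun r ⟨g, hg0, hg1, hr⟩ => ⟨g, hg0, fun x hx => hg1 x (h hx), hr⟩)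

lemma lam0_le_one (y : ℕ → X) (K : Set X) : lam0 y K ≤ 1 := by
  have := lam0_le y (K := K) (g := 1) (fun x => by simp) (fun x _ => by simp)
  rwa [lam_one] at this

lemma lam0_univ (y : ℕ → X) : lam0 y (Set.univ : Set X) = 1 := by
  refine le_antisymm (lam0_le_one y _) ?_
  refine le_csInf (FF_nonempty y _) fun r ⟨g, hg0, hg1, hr⟩ => ?_
  have : lam y 1 ≤ lam y g := lam_mono y fun x => by simpa using hg1 x (Set.mem_univ x)
  rw [lam_one] at this
  exact hr ▸ this

lemma exists_mem_FF_lt (y : ℕ → X) (K : Set X) {ε : ℝ} (hε : 0 < ε) :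
    ∃ g : C(X, ℝ), (∀ x, 0 ≤ g x) ∧ (∀ x ∈ K, 1 ≤ g x) ∧ lam y g < lam0 y K + ε := by
  obtain ⟨r, ⟨g, hg0, hg1, hr⟩, hlt⟩ :=
    exists_lt_of_csInf_lt (FF_nonempty y K) (lt_add_of_pos_right (lam0 y K) hε)
  exact ⟨g, hg0, hg1, hr ▸ hlt⟩

lemma lam0_union_le (y : ℕ → X) (K₁ K₂ : Set X) :
    lam0 y (K₁ ∪ K₂) ≤ lam0 y K₁ + lam0 y K₂ := by
  refine le_of_forall_pos_le_add fun ε hε => ?_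
  obtain ⟨g₁, hg₁0, hg₁1, hg₁⟩ := exists_mem_FF_lt y K₁ (half_pos hε)
  obtain ⟨g₂, hg₂0, hg₂1, hg₂⟩ := exists_mem_FF_lt y K₂ (half_pos hε)
  have hle : lam0 y (K₁ ∪ K₂) ≤ lam y (g₁ + g₂) := by
    refine lam0_le y (fun x => ?_) (fun x hx => ?_)
    · simpa using add_nonneg (hg₁0 x) (hg₂0 x)
    · rcases hx with hx | hx
      · simpa using le_add_of_le_of_nonneg (hg₁1 x hx) (hg₂0 x)
      · simpa using le_add_of_nonneg_of_le (hg₁0 x) (hg₂1 x hx)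
  rw [lam_add] at hle
  linarith

lemma add_le_lam0_union (y : ℕ → X) {K₁ K₂ : Set X} (hd : Disjoint K₁ K₂)
    (h₁ : IsClosed K₁) (h₂ : IsClosed K₂) :
    lam0 y K₁ + lam0 y K₂ ≤ lam0 y (K₁ ∪ K₂) := by
  refine le_csInf (FF_nonempty y _) ?_
  rintro r ⟨g, hg0, hg1, rfl⟩
  obtain ⟨φ, hφ0, hφ1, hφmem⟩ := exists_continuous_zero_one_of_isClosed h₂ h₁ hd.symm
  have e : g * φ + g * ((1 : C(X, ℝ)) - φ) = g := by
    ext x; simp; ring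
  have h1 : lam0 y K₁ ≤ lam y (g * φ) := by
    refine lam0_le y (fun x => ?_) (fun x hx => ?_)
    · exact mul_nonneg (hg0 x) (hφmem x).1
    · have : φ x = 1 := hφ1 hx
      simpa [this] using hg1 x (Set.mem_union_left _ hx)
  have h2 : lam0 y K₂ ≤ lam y (g * ((1 : C(X, ℝ)) - φ)) := by
    refine lam0_le y (fun x => ?_) (fun x hx => ?_)
    · have : φ x ≤ 1 := (hφmem x).2
      simpa using mul_nonneg (hg0 x) (by linarith : (0:ℝ) ≤ 1 - φ x)
    · have : φ x = 0 := hφ0 hx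
      simpa [this] using hg1 x (Set.mem_union_right _ hx)
  calc lam0 y K₁ + lam0 y K₂ ≤ lam y (g * φ) + lam y (g * ((1 : C(X, ℝ)) - φ)) :=
      add_le_add h1 h2
    _ = lam y (g * φ + g * ((1 : C(X, ℝ)) - φ)) := (lam_add y _ _).symm
    _ = lam y g := by rw [e]

/-- The content associated to `lam`. -/
def cont (y : ℕ → X) : MeasureTheory.Content X where
  toFun K := ⟨lam0 y K, lam0_nonneg y K⟩
  mono' K₁ K₂ h := by
    exact lam0_mono y h
  sup_disjoint' K₁ K₂ hd h₁ h₂ := by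
    have := le_antisymm (lam0_union_le y K₁ K₂) (add_le_lam0_union y hd h₁ h₂)
    apply NNReal.coe_injective
    exact this
  sup_le' K₁ K₂ := by
    exact lam0_union_le y K₁ K₂

open TopologicalSpace in
lemma lam0_reg (y : ℕ → X) (K : Set X) {ε : ℝ} (hε : 0 < ε) :
    ∃ K' : Compacts X, K ⊆ interior (K' : Set X) ∧ lam0 y (K' : Set X) ≤ lam0 y K + ε := by
  set a : ℝ := lam0 y K + ε / 2 with ha
  set b : ℝ := lam0 y K + ε with hb
  have ha0 : 0 < a := by have := lam0_nonneg y K; rw [ha]; linarith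
  have hab : a < b := by rw [ha, hb]; linarith
  have hb0 : 0 < b := ha0.trans hab
  obtain ⟨g, hg0, hg1, hglt⟩ := exists_mem_FF_lt y K (half_pos hε)
  set t : ℝ := a / b with ht
  have ht0 : 0 < t := div_pos ha0 hb0
  have ht1 : t < 1 := (div_lt_one hb0).2 hab
  refine ⟨⟨{x | t ≤ g x}, (isClosed_le continuous_const g.continuous).isCompact⟩, ?_, ?_⟩
  · refine subset_trans (fun x hx => ?_) (interior_maximal (fun x hx => le_of_lt hx)
      (isOpen_lt continuous_const g.continuous))
    exact lt_of_lt_of_le ht1 (hg1 x hx)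
  · have h1 : lam0 y {x | t ≤ g x} ≤ lam y (t⁻¹ • g) := by
      refine lam0_le y (fun x => ?_) (fun x hx => ?_)
      · simpa using mul_nonneg (inv_nonneg.2 ht0.le) (hg0 x)
      · have : t ≤ g x := hx
        have := mul_le_mul_of_nonneg_left this (inv_nonneg.2 ht0.le)
        rw [inv_mul_cancel₀ ht0.ne'] at this
        simpa using this
    rw [lam_smul] at h1
    have h2 : t⁻¹ * lam y g ≤ t⁻¹ * a :=
      mul_le_mul_of_nonneg_left (by rw [ha]; linarith) (inv_nonneg.2 ht0.le)
    have h3 : t⁻¹ * a = b := by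
      rw [ht]; field_simp
    calc lam0 y {x | t ≤ g x} ≤ t⁻¹ * lam y g := h1
      _ ≤ t⁻¹ * a := h2
      _ = b := h3
      _ = lam0 y K + ε := hb

lemma contReg (y : ℕ → X) : (cont y).ContentRegular := by
  intro K
  refine le_antisymm (le_iInf₂ fun K' hK' => (cont y).mono _ _ (hK'.trans interior_subset)) ?_
  refine ENNReal.le_of_forall_pos_le_add fun ε hε _ => ?_
  obtain ⟨K', hK'sub, hK'le⟩ := lam0_reg y (K : Set X) (ε := (ε : ℝ)) (by exact_mod_cast hε)
  refine (iInf₂_le K' hK'sub).trans ?_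
  show ((cont y).toFun K' : ℝ≥0∞) ≤ ((cont y).toFun K : ℝ≥0∞) + ε
  rw [← ENNReal.coe_add, ENNReal.coe_le_coe, ← NNReal.coe_le_coe]
  exact hK'le

section Meas
variable [MeasurableSpace X] [BorelSpace X]

/-- The invariant measure. -/
def mu (y : ℕ → X) : Measure X := (cont y).measure

lemma mu_compact (y : ℕ → X) {K : Set X} (hK : IsCompact K) :
    mu y K = (((cont y).toFun ⟨K, hK⟩ : ℝ≥0) : ℝ≥0∞) :=
  MeasureTheory.Content.measure_eq_content_of_regular (cont y) (contReg y) ⟨K, hK⟩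

lemma mu_univ (y : ℕ → X) : mu y Set.univ = 1 := by
  rw [mu_compact y isCompact_univ]
  have : lam0 y (Set.univ : Set X) = 1 := lam0_univ y
  have h2 : (cont y).toFun ⟨Set.univ, isCompact_univ⟩ = 1 :=
    NNReal.coe_injective (by exact this)
  rw [h2]
  simp

instance mu_prob (y : ℕ → X) : IsProbabilityMeasure (mu y) := ⟨mu_univ y⟩

open TopologicalSpace in
lemma mu_open (y : ℕ → X) {U : Set X} (hU : IsOpen U) :
    mu y U = (cont y).innerContent ⟨U, hU⟩ := by
  rw [mu, MeasureTheory.Content.measure_apply _ hU.measurableSet,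
    MeasureTheory.Content.outerMeasure_of_isOpen _ U hU]

variable (T : C(X, X))

open TopologicalSpace in
lemma lam0_preimage_le (y : ℕ → X) (hyT : ∀ n ≥ 1, T (y (n + 1)) = y n) (K : Set X) :
    lam0 y (T ⁻¹' K) ≤ lam0 y K := by
  refine le_csInf (FF_nonempty y _) ?_
  rintro r ⟨g, hg0, hg1, rfl⟩
  have h1 : lam0 y (T ⁻¹' K) ≤ lam y (g.comp T) := by
    refine lam0_le y (fun x => hg0 (T x)) (fun x hx => hg1 (T x) hx)
  rwa [lam_comp y T hyT] at h1

lemma mu_preimage_le_compact (y : ℕ → X) (hyT : ∀ n ≥ 1, T (y (n + 1)) = y n)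
    {K : Set X} (hK : IsCompact K) : mu y (T ⁻¹' K) ≤ mu y K := by
  have hpre : IsCompact (T ⁻¹' K) := (hK.isClosed.preimage T.continuous).isCompact
  rw [mu_compact y hK, mu_compact y hpre, ENNReal.coe_le_coe, ← NNReal.coe_le_coe]
  exact lam0_preimage_le T y hyT K

open TopologicalSpace in
lemma mu_preimage_le_open (y : ℕ → X) (hyT : ∀ n ≥ 1, T (y (n + 1)) = y n)
    {U : Set X} (hU : IsOpen U) : mu y (T ⁻¹' U) ≤ mu y U := by
  rw [mu_open y (hU.preimage T.continuous), mu_open y hU]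
  refine iSup₂_le fun D hD => ?_
  have h1 : lam0 y (D : Set X) ≤ lam0 y (T '' D) :=
    (lam0_mono y (Set.subset_preimage_image T D)).trans (lam0_preimage_le T y hyT _)
  have h2 : ((cont y) D : ℝ≥0∞) ≤ (cont y) (⟨T '' D, D.2.image T.continuous⟩ : Compacts X) := by
    show ((cont y).toFun _ : ℝ≥0∞) ≤ ((cont y).toFun _ : ℝ≥0∞)
    rw [ENNReal.coe_le_coe, ← NNReal.coe_le_coe]
    exact h1
  exact h2.trans ((cont y).le_innerContent _ _ (Set.image_subset_iff.2 hD))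

lemma mu_preimage_closed (y : ℕ → X) (hyT : ∀ n ≥ 1, T (y (n + 1)) = y n)
    {C : Set X} (hC : IsClosed C) : mu y (T ⁻¹' C) = mu y C := by
  refine le_antisymm (mu_preimage_le_compact T y hyT hC.isCompact) ?_
  have h1 : mu y (T ⁻¹' Cᶜ) ≤ mu y Cᶜ := mu_preimage_le_open T y hyT hC.isOpen_compl
  rw [Set.preimage_compl] at h1
  have e1 : mu y ((T ⁻¹' C)ᶜ) = 1 - mu y (T ⁻¹' C) := by
    rw [measure_compl (hC.measurableSet.preimage T.continuous.measurable)
      (measure_ne_top _ _), mu_univ]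
  have e2 : mu y (Cᶜ) = 1 - mu y C := by
    rw [measure_compl hC.measurableSet (measure_ne_top _ _), mu_univ]
  rw [e1, e2] at h1
  exact (ENNReal.sub_le_sub_iff_left (prob_le_one) (by norm_num)).1 h1

lemma mu_map (y : ℕ → X) (hyT : ∀ n ≥ 1, T (y (n + 1)) = y n) :
    (mu y).map T = mu y := by
  haveI : IsProbabilityMeasure ((mu y).map T) :=
    Measure.isProbabilityMeasure_map T.continuous.measurable.aemeasurable
  refine MeasureTheory.ext_of_generate_finite {s | IsClosed s} ?_ ?_ ?_ ?_
  · rw [BorelSpace.measurable_eq (α := X), borel_eq_generateFrom_isClosed]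
  · exact fun s hs t ht _ => hs.inter ht
  · intro s hs
    rw [Measure.map_apply T.continuous.measurable hs.measurableSet]
    exact mu_preimage_closed T y hyT hs
  · rw [Measure.map_apply T.continuous.measurable MeasurableSet.univ]
    simp

open TopologicalSpace in
lemma lam0_zero_of_subset_compl_clusterSet [NormalSpace X] (y : ℕ → X) {C : Set X}
    (hC : IsCompact C) (hsub : C ⊆ {x | MapClusterPt x atTop y}ᶜ) : lam0 y C = 0 := by
  set Tset : Set X := {x | MapClusterPt x atTop y} with hTset
  have hTclosed : IsClosed Tset := isClosed_setOf_clusterPt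
  have hdisj : Disjoint C Tset := Set.disjoint_left.2 fun x hx => hsub hx
  obtain ⟨V, W, hVopen, hWopen, hCV, hTW, hVW⟩ := NormalSpace.normal C Tset hC.isClosed
    hTclosed hdisj
  have hev : ∀ᶠ k in atTop, y k ∈ W := by
    by_contra hcon
    rw [Filter.not_eventually] at hcon
    have hfr : ∃ᶠ z in Filter.map y atTop, z ∈ Wᶜ := by
      rwa [Filter.frequently_map]
    have hne : (Filter.map y atTop ⊓ Filter.principal Wᶜ).NeBot := by
      rwa [Filter.frequently_mem_iff_neBot] at hfr
    obtain ⟨q, hq⟩ := exists_clusterPt_of_compactSpace (Filter.map y atTop ⊓ Filter.principal Wᶜ)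
    have hq1 : q ∈ Tset := hq.mono inf_le_left
    have hq2 : q ∈ Wᶜ := by
      have := hq.mono inf_le_right
      have hcl : q ∈ closure Wᶜ := mem_closure_iff_clusterPt.2 this
      rwa [hWopen.isClosed_compl.closure_eq] at hcl
    exact hq2 (hTW hq1)
  have hclW : closure W ⊆ Vᶜ := by
    refine closure_minimal ?_ hVopen.isClosed_compl
    exact Set.subset_compl_iff_disjoint_left.2 hVW
  have hdisj2 : Disjoint (closure W) C := by
    refine Set.disjoint_left.2 fun x hx hxC => ?_
    exact (hclW hx) (hCV hxC)
  obtain ⟨g, hg0, hg1, hgmem⟩ := exists_continuous_zero_one_of_isClosed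
    isClosed_closure hC.isClosed hdisj2
  have hlam : lam y g = 0 := by
    refine lam_eventually_zero y g ?_
    filter_upwards [hev] with k hk
    exact hg0 (subset_closure hk)
  have h1 : lam0 y C ≤ 0 := by
    have := lam0_le y (K := C) (g := g) (fun x => (hgmem x).1) (fun x hx => (hg1 hx).ge)
    rwa [hlam] at this
  exact le_antisymm h1 (lam0_nonneg y C)

open TopologicalSpace in
lemma mu_compl_clusterSet [NormalSpace X] (y : ℕ → X) :
    mu y {x | MapClusterPt x atTop y}ᶜ = 0 := by
  have hTclosed : IsClosed {x | MapClusterPt x atTop y} := isClosed_setOf_clusterPt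
  rw [mu_open y hTclosed.isOpen_compl]
  refine le_antisymm ?_ (zero_le)
  refine iSup₂_le fun D hD => ?_
  have h0 : lam0 y (D : Set X) = 0 := lam0_zero_of_subset_compl_clusterSet y D.2 hD
  have h2 : (cont y).toFun D = 0 := NNReal.coe_injective (by exact h0)
  show ((cont y).toFun D : ℝ≥0∞) ≤ 0
  rw [h2]; simp

end Meas

end GXY2


namespace GXY

variable {M : Type*}

/-- The shift map on the sequence space `ℕ → M`. -/
def shift (x : ℕ → M) : ℕ → M := fun n => x (n + 1)

/-- Prepending a symbol `a` to a sequence `x`. -/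
def cons (a : M) (x : ℕ → M) : ℕ → M := fun n => Nat.casesOn n a x

/-- The metric `d(x,y) = ∑ θ^n d_M(x_n, y_n)` on `ℕ → M`. -/
def D [MetricSpace M] (θ : ℝ) (x y : ℕ → M) : ℝ := ∑' n, θ ^ n * dist (x n) (y n)

/-- Hölder continuity with respect to the metric `D θ`. -/
def IsHolder [MetricSpace M] (θ : ℝ) (f : (ℕ → M) → ℝ) : Prop :=
  ∃ C > (0 : ℝ), ∃ α ∈ Set.Ioc (0 : ℝ) 1, ∀ x y, |f x - f y| ≤ C * (D θ x y) ^ α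

/-- Shift-invariant Borel probability measures on `ℕ → M`. -/
def IsInvProb [MetricSpace M] [MeasurableSpace M] (μ : Measure (ℕ → M)) : Prop :=
  IsProbabilityMeasure μ ∧ μ.map shift = μ

/-- The maximal ergodic average `β(f)`. -/
def betaF [MetricSpace M] [MeasurableSpace M] (f : (ℕ → M) → ℝ) : ℝ :=
  sSup { r | ∃ μ : Measure (ℕ → M), IsInvProb μ ∧ r = ∫ x, f x ∂μ }

/-- A maximizing measure for `f`. -/
def IsMaximizing [MetricSpace M] [MeasurableSpace M] (f : (ℕ → M) → ℝ)
    (μ : Measure (ℕ → M)) : Prop :=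
  IsInvProb μ ∧ ∫ x, f x ∂μ = betaF f

/-- A calibrated subaction `V` for `f`:
`V y = max_{σ x = y} (f x + V x - β f)` for every `y`. -/
def IsCalibrated [MetricSpace M] [MeasurableSpace M] (f V : (ℕ → M) → ℝ) : Prop :=
  Continuous V ∧
    ∀ y, IsGreatest { t | ∃ x, shift x = y ∧ t = f x + V x - betaF f } (V y)

/-- The Ruelle transfer operator `(L_g w)(x) = ∫_M e^{g(ax)} w(ax) dm(a)`. -/
def Ruelle [MetricSpace M] [MeasurableSpace M] (m : Measure M) (g w : (ℕ → M) → ℝ) :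
    (ℕ → M) → ℝ :=
  fun x => ∫ a, Real.exp (g (cons a x)) * w (cons a x) ∂m

/-- `R₊ = β(f) + V ∘ σ - V - f ≥ 0`. -/
def Rplus [MetricSpace M] [MeasurableSpace M] (f V : (ℕ → M) → ℝ) (x : ℕ → M) : ℝ :=
  betaF f + V (shift x) - V x - f x

/-- `R₊^∞(z) = ∑_{j≥0} R₊(σ^j z) ∈ [0,∞]`. -/
def RplusInf [MetricSpace M] [MeasurableSpace M] (f V : (ℕ → M) → ℝ) (z : ℕ → M) : ℝ≥0∞ :=
  ∑' j : ℕ, ENNReal.ofReal (Rplus f V (shift^[j] z))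

/-- `R₋ = f + V - V ∘ σ - β(f) ≤ 0`. -/
def Rminus [MetricSpace M] [MeasurableSpace M] (f V : (ℕ → M) → ℝ) (x : ℕ → M) : ℝ :=
  f x + V x - V (shift x) - betaF f

/-- The Birkhoff sum `R₋^k = ∑_{j<k} R₋ ∘ σ^j`. -/
def RminusBirk [MetricSpace M] [MeasurableSpace M] (f V : (ℕ → M) → ℝ) (k : ℕ)
    (z : ℕ → M) : ℝ :=
  ∑ j ∈ Finset.range k, Rminus f V (shift^[j] z)

/-- Extended-real logarithm with the convention `log 0 = -∞`. -/
def elog (t : ℝ) : EReal := if t = 0 then ⊥ else ((Real.log t : ℝ) : EReal)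

section Top
variable [TopologicalSpace M]

lemma continuous_shift : Continuous (shift : (ℕ → M) → ℕ → M) :=
  continuous_pi fun n => continuous_apply (n + 1)

end Top

section Holder
variable [MetricSpace M]

lemma summable_D {θ : ℝ} (hθ0 : 0 ≤ θ) (hθ1 : θ < 1)
    (hdiam : ∀ a b : M, dist a b ≤ 1) (x z : ℕ → M) :
    Summable (fun n => θ ^ n * dist (x n) (z n)) := by
  refine Summable.of_nonneg_of_le (fun n => mul_nonneg (pow_nonneg hθ0 n) dist_nonneg)
    (fun n => ?_) (summable_geometric_of_lt_one hθ0 hθ1)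
  calc θ ^ n * dist (x n) (z n) ≤ θ ^ n * 1 :=
        mul_le_mul_of_nonneg_left (hdiam _ _) (pow_nonneg hθ0 n)
    _ = θ ^ n := mul_one _

lemma D_nonneg {θ : ℝ} (hθ0 : 0 ≤ θ) (x z : ℕ → M) : 0 ≤ D θ x z :=
  tsum_nonneg fun n => mul_nonneg (pow_nonneg hθ0 n) dist_nonneg

lemma tendsto_D {θ : ℝ} (hθ : θ ∈ Set.Ioo (0 : ℝ) 1)
    (hdiam : ∀ a b : M, dist a b ≤ 1) (x : ℕ → M) :
    Tendsto (fun z => D θ x z) (𝓝 x) (𝓝 0) := by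
  rw [Metric.tendsto_nhds]
  intro ε hε
  -- choose N with θ^N/(1-θ) < ε/2
  have h1θ : 0 < 1 - θ := by linarith [hθ.2]
  have htend : Tendsto (fun N : ℕ => θ ^ N * (1 - θ)⁻¹) atTop (𝓝 0) := by
    simpa using (tendsto_pow_atTop_nhds_zero_of_lt_one hθ.1.le hθ.2).mul_const (1 - θ)⁻¹
  obtain ⟨N, hN⟩ := (htend.eventually (gt_mem_nhds (by positivity : (0:ℝ) < ε / 2))).exists
  have hδ : (0 : ℝ) < ε / (2 * (N + 1)) := by positivity
  set δ := ε / (2 * (N + 1)) with hδdef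
  have hev : ∀ᶠ z in 𝓝 x, ∀ n ∈ Set.Iio N, dist (x n) (z n) < δ := by
    rw [eventually_all_finite (Set.finite_Iio N)]
    intro n _
    have hc : Tendsto (fun z : ℕ → M => z n) (𝓝 x) (𝓝 (x n)) := (continuous_apply n).tendsto x
    filter_upwards [hc (Metric.ball_mem_nhds (x n) hδ)] with z hz
    rw [dist_comm]; exact hz
  filter_upwards [hev] with z hz
  have hsum := summable_D hθ.1.le hθ.2 hdiam x z
  have hsplit := Summable.sum_add_tsum_nat_add (f := fun n => θ ^ n * dist (x n) (z n)) N hsum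
  have htail : ∑' (i : ℕ), θ ^ (i + N) * dist (x (i + N)) (z (i + N)) ≤ θ ^ N * (1 - θ)⁻¹ := by
    have h2 : ∑' (i : ℕ), θ ^ (i + N) * dist (x (i + N)) (z (i + N)) ≤ ∑' (i : ℕ), θ ^ (i + N) := by
      refine Summable.tsum_le_tsum (fun i => ?_) ((summable_nat_add_iff N).2 hsum) ?_
      · calc θ ^ (i + N) * dist (x (i + N)) (z (i + N)) ≤ θ ^ (i + N) * 1 :=
            mul_le_mul_of_nonneg_left (hdiam _ _) (pow_nonneg hθ.1.le _)
          _ = θ ^ (i + N) := mul_one _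
      · simpa [pow_add] using (summable_geometric_of_lt_one hθ.1.le hθ.2).mul_right (θ ^ N)
    have h3 : ∑' (i : ℕ), θ ^ (i + N) = θ ^ N * (1 - θ)⁻¹ := by
      simp only [pow_add]
      rw [tsum_mul_right, tsum_geometric_of_lt_one hθ.1.le hθ.2]
      ring
    linarith
  have hhead : ∑ n ∈ Finset.range N, θ ^ n * dist (x n) (z n) ≤ N * δ := by
    have : ∀ n ∈ Finset.range N, θ ^ n * dist (x n) (z n) ≤ δ := by
      intro n hn
      have h1 : θ ^ n ≤ 1 := pow_le_one₀ hθ.1.le hθ.2.le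
      have h2 : dist (x n) (z n) ≤ δ := (hz n (Finset.mem_range.1 hn)).le
      calc θ ^ n * dist (x n) (z n) ≤ 1 * δ :=
          mul_le_mul h1 h2 dist_nonneg zero_le_one
        _ = δ := one_mul _
    calc ∑ n ∈ Finset.range N, θ ^ n * dist (x n) (z n) ≤ ∑ _n ∈ Finset.range N, δ :=
        Finset.sum_le_sum this
      _ = N * δ := by simp [mul_comm]
  have hNδ : (N : ℝ) * δ < ε / 2 := by
    rw [hδdef, mul_div_assoc']
    rw [div_lt_div_iff₀ (by positivity) (by norm_num)]
    nlinarith [Nat.cast_nonneg (α := ℝ) N, hε]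
  have hDle : D θ x z < ε := by
    have : D θ x z = ∑ n ∈ Finset.range N, θ ^ n * dist (x n) (z n)
        + ∑' (i : ℕ), θ ^ (i + N) * dist (x (i + N)) (z (i + N)) := hsplit.symm
    rw [this]
    calc _ ≤ (N : ℝ) * δ + θ ^ N * (1 - θ)⁻¹ := add_le_add hhead htail
      _ < ε / 2 + ε / 2 := add_lt_add_of_lt_of_le hNδ hN.le
      _ = ε := by ring
  rw [Real.dist_eq, sub_zero, abs_of_nonneg (D_nonneg hθ.1.le x z)]
  exact hDle

lemma D_comm {θ : ℝ} (x z : ℕ → M) : D θ x z = D θ z x := by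
  unfold D; simp [dist_comm]

lemma continuous_of_isHolder {θ : ℝ} (hθ : θ ∈ Set.Ioo (0 : ℝ) 1)
    (hdiam : ∀ a b : M, dist a b ≤ 1) {f : (ℕ → M) → ℝ} (hf : IsHolder θ f) :
    Continuous f := by
  obtain ⟨C, hC, α, hα, hfle⟩ := hf
  rw [continuous_iff_continuousAt]
  intro x
  have hD := tendsto_D hθ hdiam x
  have hpow : Tendsto (fun z => (D θ x z) ^ α) (𝓝 x) (𝓝 0) := by
    have hc : ContinuousAt (fun t : ℝ => t ^ α) 0 :=
      Real.continuousAt_rpow_const 0 α (Or.inr hα.1.le)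
    have := hc.tendsto.comp hD
    simpa [Function.comp_def, Real.zero_rpow (ne_of_gt hα.1)] using this
  have hmul : Tendsto (fun z => C * (D θ x z) ^ α) (𝓝 x) (𝓝 0) := by
    simpa using hpow.const_mul C
  have hsub : Tendsto (fun z => f z - f x) (𝓝 x) (𝓝 0) := by
    refine squeeze_zero_norm (fun z => ?_) hmul
    rw [Real.norm_eq_abs]
    calc |f z - f x| ≤ C * (D θ z x) ^ α := hfle z x
      _ = C * (D θ x z) ^ α := by rw [D_comm]
  have := hsub.add_const (f x)
  simpa [ContinuousAt] using this

end Holder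


theorem support_point_is_accumulation_point_of_calibrated_backward_orbit
    [MetricSpace M] [CompactSpace M] [ConnectedSpace M] [MeasurableSpace M] [BorelSpace M]
    (hdiam : ∀ a b : M, dist a b ≤ 1)
    (θ : ℝ) (hθ : θ ∈ Set.Ioo (0 : ℝ) 1)
    (f V : (ℕ → M) → ℝ) (hf : IsHolder θ f)
    (μinf : Measure (ℕ → M)) (hmax : IsMaximizing f μinf)
    (huniq : ∀ μ' : Measure (ℕ → M), IsMaximizing f μ' → μ' = μinf)
    (hV : IsCalibrated f V)
    (y : ℕ → (ℕ → M))
    (hy : ∀ n ≥ 1, shift (y (n + 1)) = y n)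
    (hR : ∀ n ≥ 1, Rminus f V (y n) = 0) :
    ∀ p : ℕ → M, (∀ U : Set (ℕ → M), IsOpen U → p ∈ U → 0 < μinf U) →
      MapClusterPt p atTop y := by
  intro p hp
  by_contra hnc
  -- the continuous shift map as a bundled map
  set Tm : C((ℕ → M), (ℕ → M)) := ⟨shift, continuous_shift⟩ with hTm
  have hyT : ∀ n ≥ 1, Tm (y (n + 1)) = y n := hy
  set μm : Measure (ℕ → M) := GXY2.mu y with hμm
  haveI : IsProbabilityMeasure μm := GXY2.mu_prob y
  have hmap : μm.map shift = μm := GXY2.mu_map Tm y hyT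
  have hμTc : μm {x | MapClusterPt x atTop y}ᶜ = 0 := GXY2.mu_compl_clusterSet y
  have hTclosed : IsClosed {x : ℕ → M | MapClusterPt x atTop y} := isClosed_setOf_clusterPt
  -- continuity
  have hfc : Continuous f := continuous_of_isHolder hθ hdiam hf
  have hVc : Continuous V := hV.1
  have hRc : Continuous (Rminus f V) := by
    have : Rminus f V = fun x => f x + V x - V (shift x) - betaF f := rfl
    rw [this]
    exact ((hfc.add hVc).sub (hVc.comp continuous_shift)).sub continuous_const
  -- Rminus vanishes on the cluster set
  have hR0 : ∀ q ∈ {x : ℕ → M | MapClusterPt x atTop y}, Rminus f V q = 0 := by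
    intro q hq
    have h1 : MapClusterPt (Rminus f V q) atTop (Rminus f V ∘ y) :=
      MapClusterPt.continuousAt_comp hRc.continuousAt hq
    have h2 : Tendsto (Rminus f V ∘ y) atTop (𝓝 0) := by
      have hev : ∀ᶠ n in atTop, (Rminus f V ∘ y) n = 0 := by
        filter_upwards [eventually_ge_atTop 1] with n hn
        exact hR n hn
      exact Tendsto.congr' (hev.mono fun n hn => hn.symm) tendsto_const_nhds
    have h3 : (𝓝 (Rminus f V q) ⊓ Filter.map (Rminus f V ∘ y) atTop).NeBot := h1
    have h4 : 𝓝 (Rminus f V q) ⊓ Filter.map (Rminus f V ∘ y) atTop ≤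
        𝓝 (Rminus f V q) ⊓ 𝓝 0 := inf_le_inf_left _ h2
    exact eq_of_nhds_neBot (h3.mono h4)
  -- Rminus is a.e. zero
  have hae : Rminus f V =ᵐ[μm] (fun _ => (0 : ℝ)) := by
    refine measure_mono_null (fun x hx => ?_) hμTc
    simp only [Set.mem_compl_iff, Set.mem_setOf_eq]
    intro hxT
    exact hx (hR0 x hxT)
  -- integrability of continuous functions
  have hint : ∀ {g : (ℕ → M) → ℝ}, Continuous g → Integrable g μm := by
    intro g hg
    obtain ⟨Cb, hCb⟩ := (isCompact_univ (X := ℕ → M)).exists_bound_of_continuousOn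
      hg.continuousOn
    exact (integrable_const Cb).mono' hg.aestronglyMeasurable
      (Filter.Eventually.of_forall fun x => hCb x (Set.mem_univ x))
  have hfint : Integrable f μm := hint hfc
  have hVint : Integrable V μm := hint hVc
  have hVsint : Integrable (fun x => V (shift x)) μm := hint (hVc.comp continuous_shift)
  -- shift-invariance of the integral of V
  have hVσ : ∫ x, V (shift x) ∂μm = ∫ x, V x ∂μm := by
    have h5 := MeasureTheory.integral_map (φ := shift) (μ := μm)
      continuous_shift.aemeasurable hVc.aestronglyMeasurable
    rw [hmap] at h5
    exact h5.symm
  -- integral of Rminus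
  have hRint : ∫ x, Rminus f V x ∂μm = (∫ x, f x ∂μm) - betaF f := by
    have e0 : ∫ x, Rminus f V x ∂μm
        = ∫ x, (f x + V x - V (shift x)) - betaF f ∂μm := rfl
    have h1 : Integrable (fun x => f x + V x - V (shift x)) μm := (hfint.add hVint).sub hVsint
    have h2 : Integrable (fun x => f x + V x) μm := hfint.add hVint
    rw [e0, integral_sub h1 (integrable_const _),
      integral_sub h2 hVsint, integral_add hfint hVint, integral_const]
    have : μm.real Set.univ = 1 := by
      simp
    rw [this, hVσ]
    simp
  have h0 : ∫ x, Rminus f V x ∂μm = 0 := by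
    rw [integral_congr_ae hae, integral_zero]
  have hfμ : ∫ x, f x ∂μm = betaF f := by linarith
  -- μm is a maximizing measure, hence equals μinf
  have hmax2 : IsMaximizing f μm := ⟨⟨inferInstance, hmap⟩, hfμ⟩
  have heq : μm = μinf := huniq μm hmax2
  -- contradiction
  have hpmem : p ∈ {x : ℕ → M | MapClusterPt x atTop y}ᶜ := hnc
  have hpos := hp _ hTclosed.isOpen_compl hpmem
  rw [← heq, hμTc] at hpos
  exact lt_irrefl 0 hpos

end GXY
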